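/- In the random candidate-DAG setting, let c ∈ (0,1) and assume the weight sequence is weakly consistent, i.e., the real random variables (Σ_{k=1}^{K_n} w^n_k · |E^{(k)}_n ∇ E*_n|) / |E*_n| converge to 0 in probability as n → ∞. Then |{(i,j) ∈ E*_n : s^n_{ij} ≤ c}| / |E*_n| → 0 in probability and |{(i,j) ∈ ([p_n]×[p_n]) \ E*_n : s^n_{ij} > c}| / |E*_n| → 0 in probability as n → ∞. -/

import Mathlib

open MeasureTheory Filter

/-- Real random variables `Z n` converge to `z` in probability:
for every `ε > 0`, `P(|Z_n − z| > ε) → 0` as `n → ∞`. -/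
def TendstoInProb {Ω : Type*} [MeasurableSpace Ω] (P : Measure Ω)
    (Z : ℕ → Ω → ℝ) (z : ℝ) : Prop :=
  ∀ ε : ℝ, 0 < ε → Tendsto (fun n => P {ω | ε < |Z n ω - z|}) atTop (nhds 0)

lemma tendstoInProb_of_le {Ω : Type*} [MeasurableSpace Ω] (P : Measure Ω)
    (Z W : ℕ → Ω → ℝ) (a : ℝ) (ha : 0 < a)
    (hle : ∀ n ω, |Z n ω| ≤ a * |W n ω|)
    (hW : TendstoInProb P W 0) : TendstoInProb P Z 0 := by
  intro ε hε
  have hW' := hW (ε / a) (div_pos hε ha)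
  refine tendsto_of_tendsto_of_tendsto_of_le_of_le tendsto_const_nhds hW'
    (fun n => zero_le) (fun n => ?_)
  refine measure_mono (fun ω hω => ?_)
  simp only [Set.mem_setOf_eq, sub_zero] at hω ⊢
  have : ε < a * |W n ω| := lt_of_lt_of_le hω (hle n ω)
  rw [div_lt_iff₀ ha, mul_comm]
  exact this

theorem daggr_weak_consistency_edge_selection
    {Ω : Type*} [MeasurableSpace Ω] (P : Measure Ω) [IsProbabilityMeasure P]
    (p K : ℕ → ℕ) (hp : ∀ n, 1 ≤ p n) (hK : ∀ n, 1 ≤ K n)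
    (w : (n : ℕ) → Fin (K n) → Ω → ℝ)
    (hw0 : ∀ n k ω, 0 ≤ w n k ω)
    (hw1 : ∀ n ω, ∑ k, w n k ω = 1)
    (hwmeas : ∀ n k, Measurable (w n k))
    (E : (n : ℕ) → Fin (K n) → Ω → Finset (Fin (p n) × Fin (p n)))
    (hEmeas : ∀ n k (e : Fin (p n) × Fin (p n)), MeasurableSet {ω | e ∈ E n k ω})
    (Estar : (n : ℕ) → Finset (Fin (p n) × Fin (p n)))
    (hEstar : ∀ n, (Estar n).Nonempty)
    (c : ℝ) (hc0 : 0 < c) (hc1 : c < 1)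
    (hweak : TendstoInProb P (fun n ω =>
      (∑ k, w n k ω * ((symmDiff (E n k ω) (Estar n)).card : ℝ))
        / ((Estar n).card : ℝ)) 0) :
    TendstoInProb P (fun n ω =>
      (((Estar n).filter fun e =>
          (∑ k, w n k ω * (if e ∈ E n k ω then (1 : ℝ) else 0)) ≤ c).card : ℝ)
        / ((Estar n).card : ℝ)) 0 ∧
    TendstoInProb P (fun n ω =>
      (((Finset.univ \ Estar n).filter fun e =>
          c < ∑ k, w n k ω * (if e ∈ E n k ω then (1 : ℝ) else 0)).card : ℝ)
        / ((Estar n).card : ℝ)) 0 := by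
  have h1c : (0:ℝ) < 1 - c := by linarith
  have hden : ∀ n, (0:ℝ) < ((Estar n).card : ℝ) := by
    intro n; exact_mod_cast (hEstar n).card_pos
  have hDnn : ∀ n ω, (0:ℝ) ≤ ∑ k, w n k ω * ((symmDiff (E n k ω) (Estar n)).card : ℝ) := by
    intro n ω
    exact Finset.sum_nonneg fun k _ => mul_nonneg (hw0 n k ω) (Nat.cast_nonneg _)
  have hs_nn : ∀ n ω (e : Fin (p n) × Fin (p n)),
      (0:ℝ) ≤ ∑ k, w n k ω * (if e ∈ E n k ω then (1 : ℝ) else 0) := by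
    intro n ω e
    exact Finset.sum_nonneg fun k _ => mul_nonneg (hw0 n k ω) (by positivity)
  have hs_le1 : ∀ n ω (e : Fin (p n) × Fin (p n)),
      (∑ k, w n k ω * (if e ∈ E n k ω then (1 : ℝ) else 0)) ≤ 1 := by
    intro n ω e
    calc (∑ k, w n k ω * (if e ∈ E n k ω then (1 : ℝ) else 0))
        ≤ ∑ k, w n k ω := by
          refine Finset.sum_le_sum fun k _ => ?_
          by_cases h : e ∈ E n k ω <;> simp [h, hw0 n k ω]
      _ = 1 := hw1 n ω
  -- key deterministic bound 1
  have key1 : ∀ n ω, (((Estar n).filter fun e =>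
          (∑ k, w n k ω * (if e ∈ E n k ω then (1 : ℝ) else 0)) ≤ c).card : ℝ) * (1 - c)
        ≤ ∑ k, w n k ω * ((symmDiff (E n k ω) (Estar n)).card : ℝ) := by
    intro n ω
    calc (((Estar n).filter fun e =>
          (∑ k, w n k ω * (if e ∈ E n k ω then (1 : ℝ) else 0)) ≤ c).card : ℝ) * (1 - c)
        = ((Estar n).filter fun e =>
          (∑ k, w n k ω * (if e ∈ E n k ω then (1 : ℝ) else 0)) ≤ c).card • (1 - c) := by
          rw [nsmul_eq_mul]
      _ ≤ ∑ e ∈ (Estar n).filter fun e =>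
            (∑ k, w n k ω * (if e ∈ E n k ω then (1 : ℝ) else 0)) ≤ c,
            (1 - ∑ k, w n k ω * (if e ∈ E n k ω then (1 : ℝ) else 0)) := by
          refine Finset.card_nsmul_le_sum _ _ _ fun e he => ?_
          have := (Finset.mem_filter.mp he).2
          linarith
      _ ≤ ∑ e ∈ Estar n,
            (1 - ∑ k, w n k ω * (if e ∈ E n k ω then (1 : ℝ) else 0)) := by
          refine Finset.sum_le_sum_of_subset_of_nonneg (Finset.filter_subset _ _)
            fun e he _ => ?_
          linarith [hs_le1 n ω e]
      _ = ∑ k, w n k ω * (((Estar n) \ (E n k ω)).card : ℝ) := by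
          have h1 : ∀ e ∈ Estar n,
              (1 - ∑ k, w n k ω * (if e ∈ E n k ω then (1 : ℝ) else 0))
              = ∑ k, w n k ω * (if e ∈ E n k ω then (0:ℝ) else 1) := by
            intro e _
            rw [show (1:ℝ) - ∑ k, w n k ω * (if e ∈ E n k ω then (1 : ℝ) else 0)
                = ∑ k, (w n k ω - w n k ω * (if e ∈ E n k ω then (1 : ℝ) else 0)) by
              rw [Finset.sum_sub_distrib, hw1 n ω]]
            refine Finset.sum_congr rfl fun k _ => ?_
            by_cases h : e ∈ E n k ω <;> simp [h]
          rw [Finset.sum_congr rfl h1, Finset.sum_comm]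
          refine Finset.sum_congr rfl fun k _ => ?_
          rw [← Finset.mul_sum]
          congr 1
          have h2 : ∀ e : Fin (p n) × Fin (p n),
              (if e ∈ E n k ω then (0:ℝ) else 1) = (if e ∉ E n k ω then (1:ℝ) else 0) := by
            intro e; by_cases h : e ∈ E n k ω <;> simp [h]
          simp_rw [h2]
          rw [Finset.sum_boole, Finset.sdiff_eq_filter]
      _ ≤ ∑ k, w n k ω * ((symmDiff (E n k ω) (Estar n)).card : ℝ) := by
          refine Finset.sum_le_sum fun k _ => ?_
          refine mul_le_mul_of_nonneg_left ?_ (hw0 n k ω)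
          have hsub : (Estar n) \ (E n k ω) ⊆ symmDiff (E n k ω) (Estar n) := by
            intro e he
            simp only [Finset.mem_sdiff] at he
            simp [Finset.mem_symmDiff, he.1, he.2]
          exact_mod_cast Finset.card_le_card hsub
  -- key deterministic bound 2
  have key2 : ∀ n ω, (((Finset.univ \ Estar n).filter fun e =>
          c < ∑ k, w n k ω * (if e ∈ E n k ω then (1 : ℝ) else 0)).card : ℝ) * c
        ≤ ∑ k, w n k ω * ((symmDiff (E n k ω) (Estar n)).card : ℝ) := by
    intro n ω
    calc (((Finset.univ \ Estar n).filter fun e =>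
          c < ∑ k, w n k ω * (if e ∈ E n k ω then (1 : ℝ) else 0)).card : ℝ) * c
        = ((Finset.univ \ Estar n).filter fun e =>
          c < ∑ k, w n k ω * (if e ∈ E n k ω then (1 : ℝ) else 0)).card • c := by
          rw [nsmul_eq_mul]
      _ ≤ ∑ e ∈ (Finset.univ \ Estar n).filter fun e =>
            c < ∑ k, w n k ω * (if e ∈ E n k ω then (1 : ℝ) else 0),
            ∑ k, w n k ω * (if e ∈ E n k ω then (1 : ℝ) else 0) := by
          refine Finset.card_nsmul_le_sum _ _ _ fun e he => ?_
          exact le_of_lt (Finset.mem_filter.mp he).2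
      _ ≤ ∑ e ∈ Finset.univ \ Estar n,
            ∑ k, w n k ω * (if e ∈ E n k ω then (1 : ℝ) else 0) := by
          exact Finset.sum_le_sum_of_subset_of_nonneg (Finset.filter_subset _ _)
            fun e _ _ => hs_nn n ω e
      _ = ∑ k, w n k ω * (((Finset.univ \ Estar n).filter (· ∈ E n k ω)).card : ℝ) := by
          rw [Finset.sum_comm]
          refine Finset.sum_congr rfl fun k _ => ?_
          rw [← Finset.mul_sum]
          congr 1
          rw [Finset.sum_boole]
      _ ≤ ∑ k, w n k ω * ((symmDiff (E n k ω) (Estar n)).card : ℝ) := by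
          refine Finset.sum_le_sum fun k _ => ?_
          refine mul_le_mul_of_nonneg_left ?_ (hw0 n k ω)
          have hsub : (Finset.univ \ Estar n).filter (· ∈ E n k ω)
              ⊆ symmDiff (E n k ω) (Estar n) := by
            intro e he
            simp only [Finset.mem_filter, Finset.mem_sdiff, Finset.mem_univ, true_and] at he
            simp [Finset.mem_symmDiff, he.1, he.2]
          exact_mod_cast Finset.card_le_card hsub
  constructor
  · refine tendstoInProb_of_le P _ _ (1 / (1 - c)) (by positivity) (fun n ω => ?_) hweak
    rw [abs_of_nonneg (div_nonneg (Nat.cast_nonneg _) (Nat.cast_nonneg _)),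
      abs_of_nonneg (div_nonneg (hDnn n ω) (Nat.cast_nonneg _))]
    rw [div_mul_div_comm, one_mul, div_le_div_iff₀ (hden n) (by positivity)]
    have := key1 n ω
    nlinarith [hden n]
  · refine tendstoInProb_of_le P _ _ (1 / c) (by positivity) (fun n ω => ?_) hweak
    rw [abs_of_nonneg (div_nonneg (Nat.cast_nonneg _) (Nat.cast_nonneg _)),
      abs_of_nonneg (div_nonneg (hDnn n ω) (Nat.cast_nonneg _))]
    rw [div_mul_div_comm, one_mul, div_le_div_iff₀ (hden n) (by positivity)]
    have := key2 n ω
    nlinarith [hden n]
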